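/- Let a, b ∈ ZMod r, not both zero, and set α := a − b·ω ∈ F (a, b viewed in F via the algebra map). Then α ≠ 0, a² + a·b + b² ≠ 0 in ZMod r, and Tr(α^{r−1}) = 3·a·(a+b)·(a² + a·b + b²)⁻¹ − 1 in ZMod r. -/

import Mathlib

open Finset

/-- For `a, b ∈ ZMod r` not both zero and `α = a − b·ω` (where `ω² + ω + 1 = 0` in `F`),
we have `α ≠ 0`, `a² + ab + b² ≠ 0`, and
`Tr(α^{r−1}) = 3a(a+b)·(a² + ab + b²)⁻¹ − 1`. -/
theorem stmt5 (r : ℕ) (hr : r.Prime) (hodd : Odd r) (h3 : r % 3 = 2)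
    (F : Type*) [Field F] [Fintype F] [Algebra (ZMod r) F]
    (hcard : Fintype.card F = r ^ 2)
    (ω : F) (hω : ω ^ 2 + ω + 1 = 0)
    (a b : ZMod r) (hab : ¬(a = 0 ∧ b = 0))
    (α : F) (hα : α = algebraMap (ZMod r) F a - algebraMap (ZMod r) F b * ω) :
    α ≠ 0 ∧ a ^ 2 + a * b + b ^ 2 ≠ 0 ∧
      Algebra.trace (ZMod r) F (α ^ (r - 1)) =
        3 * a * (a + b) * (a ^ 2 + a * b + b ^ 2)⁻¹ - 1 := by
  haveI : Fact r.Prime := ⟨hr⟩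
  set φ := algebraMap (ZMod r) F with hφ
  have hinj : Function.Injective φ := (algebraMap (ZMod r) F).injective
  have hr2 : 2 ≤ r := hr.two_le
  -- x^2 + x + 1 has no root in ZMod r
  have noroot : ∀ t : ZMod r, t ^ 2 + t + 1 ≠ 0 := by
    intro t ht
    have ht1 : t ≠ 1 := by
      rintro rfl
      have h30 : ((3 : ℕ) : ZMod r) = 0 := by push_cast; linear_combination ht
      have hdvd : r ∣ 3 := (CharP.cast_eq_zero_iff (ZMod r) r 3).mp h30
      have := (Nat.prime_dvd_prime_iff_eq hr (by norm_num)).mp hdvd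
      omega
    have ht0 : t ≠ 0 := by
      rintro rfl
      simp at ht
    have t3 : t ^ 3 = 1 := by linear_combination (t - 1) * ht
    have horder : orderOf t ∣ 3 := orderOf_dvd_of_pow_eq_one t3
    rcases (Nat.Prime.eq_one_or_self_of_dvd (by norm_num) _ horder) with h1 | h1
    · exact ht1 (orderOf_eq_one_iff.mp h1)
    · have hd : orderOf t ∣ r - 1 :=
        orderOf_dvd_of_pow_eq_one (ZMod.pow_card_sub_one_eq_one ht0)
      rw [h1] at hd
      omega
  have hN : a ^ 2 + a * b + b ^ 2 ≠ 0 := by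
    intro h
    by_cases hb : b = 0
    · subst hb
      have ha : a = 0 := by
        have : a ^ 2 = 0 := by linear_combination h
        exact pow_eq_zero_iff (n := 2) (by norm_num) |>.mp this
      exact hab ⟨ha, rfl⟩
    · apply noroot (a * b⁻¹)
      field_simp
      linear_combination h
  set N : ZMod r := a ^ 2 + a * b + b ^ 2 with hNdef
  have hφN : φ N ≠ 0 := fun h => hN (hinj (h.trans (map_zero φ).symm))
  -- α times its conjugate is N
  have hconj : α * (φ a + φ b + φ b * ω) = φ N := by
    rw [hα, hNdef]
    simp only [map_add, map_mul, map_pow]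
    linear_combination (-(φ b) ^ 2) * hω
  have hα0 : α ≠ 0 := by
    intro h
    rw [h, zero_mul] at hconj
    exact hφN hconj.symm
  refine ⟨hα0, hN, ?_⟩
  -- characteristic
  haveI : CharP F r := charP_of_injective_algebraMap hinj r
  -- ω^r = ω^2
  have hω3 : ω ^ 3 = 1 := by linear_combination (ω - 1) * hω
  have hrr : r = 3 * (r / 3) + 2 := by omega
  have hωr : ω ^ r = ω ^ 2 := by
    calc ω ^ r = (ω ^ 3) ^ (r / 3) * ω ^ 2 := by
          rw [← pow_mul, ← pow_add, ← hrr]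
      _ = ω ^ 2 := by rw [hω3, one_pow, one_mul]
  -- Frobenius on α
  have hαr : α ^ r = φ a - φ b * ω ^ 2 := by
    rw [hα, sub_pow_char, mul_pow, ← map_pow, ← map_pow, ZMod.pow_card, ZMod.pow_card, hωr]
  -- key identity
  have key : ((φ a ^ 2 + 2 * φ a * φ b) + (2 * φ a * φ b + φ b ^ 2) * ω) * α
      = φ N * α ^ r := by
    rw [hαr, hα, hNdef]
    simp only [map_add, map_mul, map_pow, map_ofNat]
    linear_combination ((φ a) ^ 2 * φ b - φ a * (φ b) ^ 2) * hω
  set c : ZMod r := (a ^ 2 + 2 * a * b) * N⁻¹ with hc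
  set d : ZMod r := (2 * a * b + b ^ 2) * N⁻¹ with hd
  have hpow : α ^ (r - 1) = φ c + φ d * ω := by
    have h1 : α ^ (r - 1) * α = α ^ r := by
      rw [← pow_succ]
      congr 1
      omega
    have hcd : φ c + φ d * ω
        = φ N⁻¹ * ((φ a ^ 2 + 2 * φ a * φ b) + (2 * φ a * φ b + φ b ^ 2) * ω) := by
      rw [hc, hd]
      simp only [map_add, map_mul, map_pow, map_ofNat]
      ring
    have h2 : (φ c + φ d * ω) * α = α ^ r := by
      rw [hcd, mul_assoc, key, ← mul_assoc, ← map_mul, inv_mul_cancel₀ hN, map_one, one_mul]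
    exact mul_right_cancel₀ hα0 (h1.trans h2.symm)
  -- basis {1, ω}
  have hfr : Module.finrank (ZMod r) F = 2 := by
    have h := Module.card_eq_pow_finrank (K := ZMod r) (V := F)
    rw [ZMod.card, hcard] at h
    exact (Nat.pow_right_injective hr2 h.symm)
  have hli : LinearIndependent (ZMod r) ![(1 : F), ω] := by
    rw [LinearIndependent.pair_iff]
    intro s t hst
    rw [Algebra.smul_def, Algebra.smul_def, mul_one] at hst
    by_cases htz : t = 0
    · subst htz
      rw [map_zero, zero_mul, add_zero] at hst
      exact ⟨hinj (hst.trans (map_zero φ).symm), rfl⟩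
    · exfalso
      have hφt : φ t ≠ 0 := fun h => htz (hinj (h.trans (map_zero φ).symm))
      have hωeq : ω = φ (-(s * t⁻¹)) := by
        apply mul_left_cancel₀ hφt
        rw [← map_mul]
        have htt : t * -(s * t⁻¹) = -s := by field_simp
        rw [htt, map_neg]
        linear_combination hst
      apply noroot (-(s * t⁻¹))
      apply hinj
      rw [map_zero]
      push_cast [map_add, map_mul, map_pow, map_one]
      rw [← hωeq]
      exact hω
  have hcard2 : Fintype.card (Fin 2) = Module.finrank (ZMod r) F := by
    simp [hfr]
  set B := basisOfLinearIndependentOfCardEqFinrank hli hcard2 with hBdef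
  have hB : ⇑B = ![(1 : F), ω] := coe_basisOfLinearIndependentOfCardEqFinrank hli hcard2
  have hB0 : B 0 = 1 := by rw [hB]; rfl
  have hB1 : B 1 = ω := by rw [hB]; rfl
  have htrace : ∀ u v : ZMod r, Algebra.trace (ZMod r) F (φ u + φ v * ω) = 2 * u - v := by
    intro u v
    classical
    rw [Algebra.trace_eq_matrix_trace B, Matrix.trace, Fin.sum_univ_two]
    have e0 : (φ u + φ v * ω) * B 0 = u • B 0 + v • B 1 := by
      rw [hB0, hB1, Algebra.smul_def, Algebra.smul_def, mul_one, mul_one]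
    have e1 : (φ u + φ v * ω) * B 1 = (-v) • B 0 + (u - v) • B 1 := by
      rw [hB0, hB1, Algebra.smul_def, Algebra.smul_def, mul_one, map_neg, map_sub]
      linear_combination (φ v) * hω
    have hm : ∀ i : Fin 2, Matrix.diag ((Algebra.leftMulMatrix B) (φ u + φ v * ω)) i
        = B.repr ((φ u + φ v * ω) * B i) i :=
      fun i => Algebra.leftMulMatrix_eq_repr_mul _ _ _ _
    rw [hm 0, hm 1, e0, e1]
    simp [Module.Basis.repr_self, Finsupp.single_apply]
    ring
  rw [hpow, htrace c d, hc, hd]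
  field_simp
  ring
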